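/- The curve S is not contained in any hyperplane of ℙ^n(ℂ): if L_0, …, L_n ∈ ℂ are such that L_0 x_0 + L_1 x_1 + ⋯ + L_n x_n = 0 for every nonzero x ∈ ℂ^{n+1} satisfying the defining equations of S, then L_0 = L_1 = ⋯ = L_n = 0. -/

import Mathlib

open Fin.NatCast in
/-- A nonzero vector `x ∈ ℂ^{n+1}` satisfies the defining equations of the generalized
Fermat curve of type `(k,n)`: `lam i * x₀^k + x₁^k + x_{i+2}^k = 0` for `0 ≤ i ≤ n - 2`
(with `lam 0 = 1`). -/
def fermatEqns (n k : ℕ) (lam : ℕ → ℂ) (x : Fin (n + 1) → ℂ) : Prop :=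
  ∀ i : ℕ, i ≤ n - 2 → lam i * x 0 ^ k + x 1 ^ k + x ((i + 2 : ℕ) : Fin (n + 1)) ^ k = 0

/-- the generalized Fermat curve `S` of type `(k,n)` is not contained in any
hyperplane of `ℙⁿ(ℂ)`: a linear form vanishing on all nonzero solutions of the defining
equations of `S` is identically zero. -/
theorem stmt_12 (k n : ℕ) (hk : 2 ≤ k) (hn : 2 ≤ n)
    (lam : ℕ → ℂ) (hlam0 : lam 0 = 1)
    (hlam_ne0 : ∀ i, 1 ≤ i → i ≤ n - 2 → lam i ≠ 0)
    (hlam_ne1 : ∀ i, 1 ≤ i → i ≤ n - 2 → lam i ≠ 1)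
    (hlam_inj : ∀ i j, i ≤ n - 2 → j ≤ n - 2 → lam i = lam j → i = j)
    (L : Fin (n + 1) → ℂ)
    (hL : ∀ x : Fin (n + 1) → ℂ, x ≠ 0 → fermatEqns n k lam x →
      ∑ j : Fin (n + 1), L j * x j = 0) :
    L = 0 := by
  have hk0 : 0 < k := by omega
  have hlamne : ∀ i, i ≤ n - 2 → lam i ≠ 0 := by
    intro i hi
    rcases Nat.eq_zero_or_pos i with h0 | h1
    · subst h0; rw [hlam0]; exact one_ne_zero
    · exact hlam_ne0 i h1 hi
  -- choose s avoiding finitely many bad values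
  obtain ⟨s, hs⟩ := Infinite.exists_notMem_finset
    (insert (0:ℂ) ((Finset.range (n-1)).image fun i => -(lam i)⁻¹))
  have hs0 : s ≠ 0 := by intro h; apply hs; simp [h]
  have hsi : ∀ i, i ≤ n - 2 → lam i * s + 1 ≠ 0 := by
    intro i hi h
    have hne := hlamne i hi
    apply hs
    have hse : s = -(lam i)⁻¹ := by
      field_simp
      linear_combination h
    rw [hse]
    exact Finset.mem_insert_of_mem (Finset.mem_image.mpr ⟨i, by simp; omega, rfl⟩)
  -- target values of x_m^k
  set F : ℕ → ℂ := fun m => if m = 0 then s else if m = 1 then 1 else -(lam (m - 2) * s + 1)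
    with hF
  have hFne : ∀ m, m ≤ n → F m ≠ 0 := by
    intro m hm
    rcases Nat.eq_zero_or_pos m with rfl | h1
    · simpa [hF] using hs0
    rcases Nat.eq_or_lt_of_le h1 with h1' | h2
    · simp [hF, ← h1']
    · have hm2 : m - 2 ≤ n - 2 := by omega
      have := hsi (m - 2) hm2
      simp only [hF]
      rw [if_neg (by omega), if_neg (by omega)]
      exact neg_ne_zero.mpr this
  choose r hr using fun m => IsAlgClosed.exists_pow_nat_eq (F m) hk0
  set x : Fin (n+1) → ℂ := fun j => r j.val with hx
  have hxne : ∀ m : Fin (n+1), x m ≠ 0 := by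
    intro m h
    have h' : r m.val = 0 := h
    have : F m.val = 0 := by rw [← hr m.val, h', zero_pow (by omega : k ≠ 0)]
    exact hFne m.val (by omega) this
  have hv0 : (0 : Fin (n+1)).val = 0 := rfl
  have hv1 : (1 : Fin (n+1)).val = 1 := by
    rw [Fin.val_one']; exact Nat.mod_eq_of_lt (by omega)
  open Fin.NatCast in
  have hfe : fermatEqns n k lam x := by
    intro i hi
    have hvi : ((i + 2 : ℕ) : Fin (n + 1)).val = i + 2 := by
      rw [Fin.val_natCast]; exact Nat.mod_eq_of_lt (by omega)
    have e0 : x 0 ^ k = s := by rw [hx]; simp only [hv0, hr 0, hF]; norm_num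
    have e1 : x 1 ^ k = 1 := by rw [hx]; simp only [hv1, hr 1, hF]; norm_num
    have e2 : x ((i + 2 : ℕ) : Fin (n + 1)) ^ k = -(lam i * s + 1) := by
      rw [hx]; simp only [hvi, hr (i+2), hF]
      rw [if_neg (by omega), if_neg (by omega)]
      norm_num
    rw [e0, e1, e2]; ring
  have hxne0 : x ≠ 0 := by
    intro h
    exact hxne 0 (by rw [h]; rfl)
  -- root of unity
  have hprim := Complex.isPrimitiveRoot_exp k (by omega)
  set ζ := Complex.exp (2 * Real.pi * Complex.I / k) with hζ
  have hζk : ζ ^ k = 1 := hprim.pow_eq_one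
  have hζ1 : ζ ≠ 1 := hprim.ne_one (by omega)
  have hζ0 : ζ ≠ 0 := by
    intro h; rw [h] at hζk; simp [zero_pow (by omega : k ≠ 0)] at hζk
  -- kill each L j
  have key : ∀ j : Fin (n+1), L j = 0 := by
    intro j
    set x' : Fin (n+1) → ℂ := Function.update x j (ζ * x j) with hx'
    have hxk : ∀ m, x' m ^ k = x m ^ k := by
      intro m
      rcases eq_or_ne m j with rfl | h
      · rw [hx', Function.update_self, mul_pow, hζk, one_mul]
      · rw [hx', Function.update_of_ne h]
    have hfe' : fermatEqns n k lam x' := by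
      intro i hi
      rw [hxk, hxk, hxk]; exact hfe i hi
    have hxne0' : x' ≠ 0 := by
      intro h
      rcases eq_or_ne j 0 with rfl | hne
      · have : x' 0 = 0 := by rw [h]; rfl
        rw [hx', Function.update_self] at this
        exact (mul_ne_zero hζ0 (hxne 0)) this
      · have : x' 0 = 0 := by rw [h]; rfl
        rw [hx', Function.update_of_ne (Ne.symm hne)] at this
        exact hxne 0 this
    have S1 := hL x hxne0 hfe
    have S2 := hL x' hxne0' hfe'
    have hdiff : ∑ m : Fin (n+1), (L m * x' m - L m * x m)
        = L j * (ζ * x j) - L j * x j := by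
      rw [Finset.sum_eq_single j]
      · rw [hx', Function.update_self]
      · intro b _ hb; rw [hx', Function.update_of_ne hb]; ring
      · intro h; exact absurd (Finset.mem_univ j) h
    rw [Finset.sum_sub_distrib, S1, S2, sub_zero] at hdiff
    have : L j * x j * (ζ - 1) = 0 := by linear_combination -hdiff
    rcases mul_eq_zero.mp this with h | h
    · rcases mul_eq_zero.mp h with h | h
      · exact h
      · exact absurd h (hxne j)
    · exact absurd (by linear_combination h) hζ1
  funext j
  exact key j
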